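/- Suppose u ∈ L¹ ∩ L^∞(ℝ), H ∈ L¹_loc with e^{a|·|} H ∈ L¹(ℝ) for some a > 0, r > 1, and |u(x)| ≤ M ∫ |H(x-y)| |u(y)|^r dy for a.e. x. If e^{ν|·|} u ∈ L¹ ∩ L^∞(ℝ) for some ν > 0 with rν ≤ a, then e^{rν|·|} u ∈ L¹ ∩ L^∞(ℝ). -/

import Mathlib

open MeasureTheory Real
open scoped Convolution

theorem stmt13 (u H : ℝ → ℝ) (M a ν r : ℝ) (hM : 0 < M) (ha : 0 < a) (hr : 1 < r)
    (hu1 : MeasureTheory.Integrable u) (huB : ∃ B, ∀ x, |u x| ≤ B)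
    (hH : MeasureTheory.Integrable (fun x => Real.exp (a * |x|) * |H x|))
    (hineq : ∀ᵐ x : ℝ ∂MeasureTheory.volume,
      |u x| ≤ M * ∫ y : ℝ, |H (x - y)| * |u y| ^ r)
    (hν : 0 < ν) (hrν : r * ν ≤ a)
    (huν1 : MeasureTheory.Integrable (fun x => Real.exp (ν * |x|) * u x))
    (huνB : ∃ B, ∀ x, Real.exp (ν * |x|) * |u x| ≤ B) :
    MeasureTheory.Integrable (fun x => Real.exp (r * ν * |x|) * u x) ∧
    ∃ B, ∀ᵐ x : ℝ ∂MeasureTheory.volume, Real.exp (r * ν * |x|) * |u x| ≤ B := by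
  obtain ⟨Bν, hBν⟩ := huνB
  have hBν0 : 0 ≤ Bν := le_trans (by positivity) (hBν 0)
  have hrν0 : 0 < r * ν := mul_pos (lt_trans one_pos hr) hν
  set f : ℝ → ℝ := fun y => (Real.exp (ν * |y|) * |u y|) ^ r with hf_def
  set G : ℝ → ℝ := fun x => Real.exp (r * ν * |x|) * |H x| with hG_def
  -- measurability facts
  have hum : AEMeasurable u := hu1.aemeasurable
  have hfm : AEStronglyMeasurable f volume := by
    have : AEMeasurable f := by
      apply AEMeasurable.pow
      · exact ((Real.measurable_exp.comp ((measurable_const.mul measurable_id).comp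
          measurable_norm)).aemeasurable.mul hum.norm)
      · exact aemeasurable_const
    exact this.aestronglyMeasurable
  have hHm : AEMeasurable (fun x => |H x|) := by
    have h1 : AEMeasurable (fun x => Real.exp (a * |x|) * |H x|) := hH.aemeasurable
    have h2 : AEMeasurable (fun x => Real.exp (-(a * |x|))) :=
      (Real.measurable_exp.comp ((measurable_const.mul measurable_norm).neg)).aemeasurable
    have : AEMeasurable (fun x => Real.exp (-(a * |x|)) * (Real.exp (a * |x|) * |H x|)) :=
      h2.mul h1
    refine this.congr (Filter.Eventually.of_forall fun x => ?_)
    show Real.exp (-(a * |x|)) * (Real.exp (a * |x|) * |H x|) = |H x|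
    rw [← mul_assoc, ← Real.exp_add, neg_add_cancel, Real.exp_zero, one_mul]
  have hGm : AEStronglyMeasurable G volume :=
    ((Real.measurable_exp.comp (measurable_const.mul measurable_norm)).aemeasurable.mul
      hHm).aestronglyMeasurable
  -- G is integrable
  have hG_int : Integrable G := by
    refine Integrable.mono' hH hGm (Filter.Eventually.of_forall fun x => ?_)
    have h1 : Real.exp (r * ν * |x|) ≤ Real.exp (a * |x|) :=
      Real.exp_le_exp.2 (mul_le_mul_of_nonneg_right hrν (abs_nonneg x))
    have h2 : (0:ℝ) ≤ G x := by positivity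
    rw [Real.norm_eq_abs, abs_of_nonneg h2]
    exact mul_le_mul_of_nonneg_right h1 (abs_nonneg _)
  have hG_nonneg : ∀ x, 0 ≤ G x := fun x => by positivity
  -- f is bounded by Bν ^ r
  have hf_nonneg : ∀ y, 0 ≤ f y := fun y => Real.rpow_nonneg (by positivity) r
  have hf_bdd : ∀ y, f y ≤ Bν ^ r := fun y =>
    Real.rpow_le_rpow (by positivity) (hBν y) (le_of_lt (lt_trans one_pos hr))
  -- f is integrable
  have hf_int : Integrable f := by
    refine Integrable.mono' ((huν1.abs).const_mul (Bν ^ (r - 1))) hfm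
      (Filter.Eventually.of_forall fun y => ?_)
    rw [Real.norm_eq_abs, abs_of_nonneg (hf_nonneg y)]
    set t := Real.exp (ν * |y|) * |u y| with ht_def
    have ht0 : 0 ≤ t := by positivity
    have habs : |Real.exp (ν * |y|) * u y| = t := by
      rw [abs_mul, abs_of_pos (Real.exp_pos _)]
    rw [habs]
    show t ^ r ≤ Bν ^ (r - 1) * t
    rcases eq_or_lt_of_le ht0 with h0 | h0
    · rw [← h0, Real.zero_rpow (ne_of_gt (by linarith : (0:ℝ) < r)), mul_zero]
    · have : t ^ r = t ^ (r - 1) * t := by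
        rw [← Real.rpow_add_one (ne_of_gt h0), sub_add_cancel]
      rw [this]
      exact mul_le_mul_of_nonneg_right
        (Real.rpow_le_rpow ht0 (hBν y) (by linarith)) ht0
  -- for each x, y ↦ f y * G (x - y) is integrable
  have hconv_int : ∀ x : ℝ, Integrable (fun y => f y * G (x - y)) := fun x =>
    (hG_int.comp_sub_left x).bdd_mul (c := Bν ^ r) hfm
      (Filter.Eventually.of_forall fun y => by rw [Real.norm_eq_abs, abs_of_nonneg (hf_nonneg y)]; exact hf_bdd y)
  -- key pointwise bound
  have key : ∀ᵐ x : ℝ ∂volume, Real.exp (r * ν * |x|) * |u x| ≤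
      M * ∫ y : ℝ, f y * G (x - y) := by
    filter_upwards [hineq] with x hx
    have h1 : Real.exp (r * ν * |x|) * |u x| ≤
        Real.exp (r * ν * |x|) * (M * ∫ y : ℝ, |H (x - y)| * |u y| ^ r) :=
      mul_le_mul_of_nonneg_left hx (le_of_lt (Real.exp_pos _))
    refine le_trans h1 ?_
    rw [mul_left_comm, ← MeasureTheory.integral_const_mul]
    refine mul_le_mul_of_nonneg_left ?_ (le_of_lt hM)
    refine integral_mono_of_nonneg (Filter.Eventually.of_forall fun y => by positivity)
      (hconv_int x) (Filter.Eventually.of_forall fun y => ?_)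
    dsimp only
    have hxy : r * ν * |x| ≤ r * ν * |x - y| + r * ν * |y| := by
      have := abs_sub_abs_le_abs_sub x y
      nlinarith [abs_sub_abs_le_abs_sub x y, abs_nonneg (x - y), abs_nonneg y]
    have hexp : Real.exp (r * ν * |x|) ≤
        Real.exp (r * ν * |x - y|) * Real.exp (r * ν * |y|) := by
      rw [← Real.exp_add]; exact Real.exp_le_exp.2 hxy
    have hfy : Real.exp (r * ν * |y|) * |u y| ^ r = f y := by
      show _ = (Real.exp (ν * |y|) * |u y|) ^ r
      rw [Real.mul_rpow (le_of_lt (Real.exp_pos _)) (abs_nonneg _), ← Real.exp_mul,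
        show ν * |y| * r = r * ν * |y| by ring]
    calc Real.exp (r * ν * |x|) * (|H (x - y)| * |u y| ^ r)
        ≤ (Real.exp (r * ν * |x - y|) * Real.exp (r * ν * |y|)) *
          (|H (x - y)| * |u y| ^ r) := by
          refine mul_le_mul_of_nonneg_right hexp (by positivity)
      _ = f y * G (x - y) := by rw [← hfy, hG_def]; ring
  constructor
  · -- integrability
    have hconv : Integrable (f ⋆[ContinuousLinearMap.mul ℝ ℝ] G) :=
      hf_int.integrable_convolution (ContinuousLinearMap.mul ℝ ℝ) hG_int
    have hconv_eq : ∀ x, (f ⋆[ContinuousLinearMap.mul ℝ ℝ] G) x =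
        ∫ y : ℝ, f y * G (x - y) := fun x => by
      simp [convolution_def, ContinuousLinearMap.mul_apply']
    refine Integrable.mono' (hconv.const_mul M)
      (((Real.measurable_exp.comp (measurable_const.mul
        measurable_norm)).aemeasurable.mul hum).aestronglyMeasurable) ?_
    filter_upwards [key] with x hx
    rw [Real.norm_eq_abs, abs_mul, abs_of_pos (Real.exp_pos _)]
    simpa [hconv_eq x] using hx
  · -- boundedness
    refine ⟨M * (Bν ^ r * ∫ y : ℝ, G y), ?_⟩
    filter_upwards [key] with x hx
    refine le_trans hx (mul_le_mul_of_nonneg_left ?_ (le_of_lt hM))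
    have h2 : (∫ y : ℝ, f y * G (x - y)) ≤ ∫ y : ℝ, Bν ^ r * G (x - y) := by
      refine integral_mono_of_nonneg (Filter.Eventually.of_forall fun y => by positivity)
        ((hG_int.comp_sub_left x).const_mul _)
        (Filter.Eventually.of_forall fun y => ?_)
      exact mul_le_mul_of_nonneg_right (hf_bdd y) (hG_nonneg _)
    refine le_trans h2 ?_
    rw [MeasureTheory.integral_const_mul]
    rw [MeasureTheory.integral_sub_left_eq_self G volume x]
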